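/- For every p ∈ (0, 1/2], it holds that p ≥ H₂(p) / ( 2 · log₂( 6 / H₂(p) ) ); equivalently, the inverse of the binary entropy function on [0, 1/2] satisfies H₂⁻¹(s) ≥ s / (2 · log₂(6/s)) for all s ∈ (0, 1]. -/

import Mathlib

/-- The binary entropy function (base 2):
`H₂(p) = - p·log₂ p - (1 - p)·log₂(1 - p)`.
(The convention `0 · log₂ 0 = 0` is automatic since `Real.logb 2 0 = 0`.) -/
noncomputable def binEnt (p : ℝ) : ℝ :=
  -(p * Real.logb 2 p) - (1 - p) * Real.logb 2 (1 - p)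

set_option maxHeartbeats 1000000 in
/-- (Lemma of Calabro.) For every `p ∈ (0, 1/2]`,
`p ≥ H₂(p) / (2 · log₂(6 / H₂(p)))`; equivalently, the inverse binary entropy
function satisfies `H₂⁻¹(s) ≥ s / (2 · log₂(6/s))` for all `s ∈ (0, 1]`. -/
theorem inv_binEnt_lower_bound (p : ℝ) (hp0 : 0 < p) (hp : p ≤ 1 / 2) :
    p ≥ binEnt p / (2 * Real.logb 2 (6 / binEnt p)) := by
  have hl2 : (0:ℝ) < Real.log 2 := Real.log_pos (by norm_num)
  have hl2a : (0.6931471803 : ℝ) < Real.log 2 := Real.log_two_gt_d9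
  have hl2b : Real.log 2 < 0.6931471808 := Real.log_two_lt_d9
  set E := Real.exp 1 with hEdef
  have he1 : (2.7182818283 : ℝ) < E := Real.exp_one_gt_d9
  have he2 : E < 2.7182818286 := Real.exp_one_lt_d9
  have he0 : (0:ℝ) < E := by linarith
  have hp1 : p < 1 := lt_of_le_of_lt hp (by norm_num)
  have h1p : (0:ℝ) < 1 - p := by linarith
  have hlnp : Real.log p < 0 := Real.log_neg hp0 hp1
  set q := Real.sqrt p with hqdef
  have hq0 : 0 < q := Real.sqrt_pos.2 hp0
  have hqp : q ^ 2 = p := Real.sq_sqrt hp0.le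
  have hq1 : q ≤ 1 := Real.sqrt_le_one.2 (by linarith)
  have hkey0 : Real.log (1 / (E * q)) ≤ 1 / (E * q) - 1 :=
    Real.log_le_sub_one_of_pos (by positivity)
  have hlog1q : -Real.log q ≤ 1 / (E * q) := by
    have heq : Real.log (1 / (E * q)) = -1 - Real.log q := by
      rw [Real.log_div one_ne_zero (by positivity), Real.log_mul (by positivity) hq0.ne',
        hEdef, Real.log_exp, Real.log_one]
      ring
    linarith [heq ▸ hkey0]
  have hlogp2 : Real.log p = 2 * Real.log q := by
    rw [← hqp, Real.log_pow]; push_cast; ring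
  have hA : 1 - Real.log p ≤ 1 + 2 / (E * q) := by
    rw [hlogp2]
    have h2 : 2 / (E * q) = 2 * (1 / (E * q)) := by ring
    linarith
  have hApos : 0 < 1 - Real.log p := by linarith
  have hB : q * (1 - Real.log p) ≤ q + 2 / E := by
    have h := mul_le_mul_of_nonneg_left hA hq0.le
    have heq : q * (1 + 2 / (E * q)) = q + 2 / E := by
      field_simp
    linarith [heq ▸ h]
  -- key numeric inequality
  have hC : E * (p * (1 - Real.log p) ^ 2) ≤ 36 * Real.log 2 ^ 2 := by
    have h1 : p * (1 - Real.log p) ^ 2 = (q * (1 - Real.log p)) ^ 2 := by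
      rw [mul_pow, hqp]
    have h2 : (q * (1 - Real.log p)) ^ 2 ≤ (1 + 2 / E) ^ 2 := by
      apply sq_le_sq'
      · nlinarith [mul_pos hq0 hApos]
      · linarith
    have h3 : E * (1 + 2 / E) ^ 2 ≤ 36 * Real.log 2 ^ 2 := by
      have hex : E * (1 + 2 / E) ^ 2 = E + 4 + 4 / E := by
        field_simp; ring
      rw [hex]
      have h4 : 4 / E < 4 / 2.7182818283 := by
        apply div_lt_div_of_pos_left <;> norm_num <;> linarith
      nlinarith
    calc E * (p * (1 - Real.log p) ^ 2)
        ≤ E * (1 + 2 / E) ^ 2 := by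
          rw [h1]; exact mul_le_mul_of_nonneg_left h2 he0.le
      _ ≤ 36 * Real.log 2 ^ 2 := h3
  set U : ℝ := p * (1 - Real.log p) / Real.log 2 with hUdef
  have hU0 : 0 < U := by positivity
  have hln1p : Real.log (1 - p) ≤ 0 := Real.log_nonpos (by linarith) (by linarith)
  have hbe : binEnt p = (-(p * Real.log p) - (1 - p) * Real.log (1 - p)) / Real.log 2 := by
    simp only [binEnt, Real.logb]
    ring
  -- binEnt p ≤ U
  have hstep2 : -((1 - p) * Real.log (1 - p)) ≤ p := by
    have h := Real.log_le_sub_one_of_pos (x := 1 / (1 - p)) (by positivity)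
    rw [Real.log_div one_ne_zero h1p.ne', Real.log_one] at h
    have hstep : -Real.log (1 - p) ≤ p / (1 - p) := by
      have heq : 1 / (1 - p) - 1 = p / (1 - p) := by field_simp; ring
      linarith [heq ▸ h]
    have h2 := mul_le_mul_of_nonneg_left hstep h1p.le
    rw [mul_div_cancel₀ _ h1p.ne'] at h2
    linarith
  have hHU : binEnt p ≤ U := by
    rw [hbe, hUdef, div_le_div_iff₀ hl2 hl2]
    nlinarith [hstep2, hl2]
  -- U < 6
  have hPU : p * (1 - Real.log p) ≤ 2 := by
    have h1 : q * (q * (1 - Real.log p)) ≤ 1 * (q + 2 / E) :=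
      mul_le_mul hq1 hB (by positivity) (by norm_num)
    have h2 : q * (q * (1 - Real.log p)) = p * (1 - Real.log p) := by
      rw [← hqp]; ring
    have h3 : 2 / E < 1 := by
      rw [div_lt_one he0]; linarith
    linarith
  have hU6 : U < 6 := by
    rw [hUdef, div_lt_iff₀ hl2]
    linarith [hPU, hl2a]
  have hH0 : 0 < binEnt p := by
    rw [hbe]
    apply div_pos _ hl2
    nlinarith [mul_pos hp0 (neg_pos.2 hlnp), mul_nonneg h1p.le (neg_nonneg.2 hln1p)]
  have hH6 : binEnt p < 6 := lt_of_le_of_lt hHU hU6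
  -- middle inequality : U ≤ 2 p logb 2 (6/U)
  have hU2 : U ^ 2 = p ^ 2 * (1 - Real.log p) ^ 2 / Real.log 2 ^ 2 := by
    rw [hUdef, div_pow, mul_pow]
  have hEU : E * U ^ 2 ≤ 36 * p := by
    have h9 : E * (p ^ 2 * (1 - Real.log p) ^ 2 / Real.log 2 ^ 2) =
        E * p ^ 2 * (1 - Real.log p) ^ 2 / Real.log 2 ^ 2 := by ring
    rw [hU2, h9, div_le_iff₀ (by positivity : (0:ℝ) < Real.log 2 ^ 2)]
    nlinarith [mul_le_mul_of_nonneg_left hC hp0.le]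
  have hepU : E / p ≤ (6 / U) ^ 2 := by
    rw [div_pow, div_le_div_iff₀ hp0 (by positivity)]
    nlinarith
  have hlog : 1 - Real.log p ≤ 2 * Real.log (6 / U) := by
    have h := Real.log_le_log (by positivity) hepU
    rw [Real.log_div (by rw [hEdef]; exact (Real.exp_pos 1).ne') hp0.ne', hEdef,
      Real.log_exp, Real.log_pow] at h
    push_cast at h
    linarith
  have hmid : U ≤ 2 * p * Real.logb 2 (6 / U) := by
    have hrw : 2 * p * Real.logb 2 (6 / U) = 2 * p * Real.log (6 / U) / Real.log 2 := by
      rw [Real.logb]; ring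
    have hUl : U * Real.log 2 = p * (1 - Real.log p) := by
      rw [hUdef]; field_simp
    rw [hrw, le_div_iff₀ hl2, hUl]
    nlinarith [mul_le_mul_of_nonneg_left hlog hp0.le]
  have hmono : Real.logb 2 (6 / U) ≤ Real.logb 2 (6 / binEnt p) := by
    exact Real.logb_le_logb_of_le (by norm_num) (by positivity)
      (div_le_div_of_nonneg_left (by norm_num) hH0 hHU)
  have hD : 0 < Real.logb 2 (6 / binEnt p) := by
    apply Real.logb_pos (by norm_num)
    rw [lt_div_iff₀ hH0]; linarith
  rw [ge_iff_le, div_le_iff₀ (by positivity)]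
  nlinarith [mul_le_mul_of_nonneg_left hmono (by positivity : (0:ℝ) ≤ 2 * p)]
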